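/- If G ⊆ 2^{[n]} is 2-wise t-intersecting and 0 < p ≤ 1/2, then μ_p(G) ≤ (p/q)^t, where q = 1 − p. -/

import Mathlib

open Finset

/-- p-biased measure of a family on ground set of size `n` (= `[n]`). -/
def mu (p : ℝ) (n : ℕ) (G : Finset (Finset ℕ)) : ℝ :=
  ∑ A ∈ G, p ^ A.card * (1 - p) ^ (n - A.card)

/-- p-biased measure of a family on an arbitrary finite ground set `X`. -/
def muOn (p : ℝ) (X : Finset ℕ) (G : Finset (Finset ℕ)) : ℝ :=
  ∑ A ∈ G, p ^ A.card * (1 - p) ^ (X.card - A.card)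

/-- `F_0^t = {F ⊆ [n] : [t] ⊆ F}`. -/
def F0 (n t : ℕ) : Finset (Finset ℕ) :=
  (Finset.Icc 1 n).powerset.filter (fun F => Finset.Icc 1 t ⊆ F)

/-- `F_1^t = {F ⊆ [n] : |F ∩ [t+3]| ≥ t+2}`. -/
def F1 (n t : ℕ) : Finset (Finset ℕ) :=
  (Finset.Icc 1 n).powerset.filter (fun F => t + 2 ≤ (F ∩ Finset.Icc 1 (t + 3)).card)

/-- `F_2^t = {F ⊆ [n] : |F ∩ [t+6]| ≥ t+4}`. -/
def F2 (n t : ℕ) : Finset (Finset ℕ) :=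
  (Finset.Icc 1 n).powerset.filter (fun F => t + 4 ≤ (F ∩ Finset.Icc 1 (t + 6)).card)

/-- `p_0(t) = 2/(√(4t+9) − 1)`. -/
noncomputable def p0 (t : ℕ) : ℝ := 2 / (Real.sqrt (4 * t + 9) - 1)

/-- The family is `r`-wise `t`-intersecting: any `r` members (with repetition)
intersect in at least `t` elements. -/
def RWise (r t : ℕ) (G : Finset (Finset ℕ)) : Prop :=
  ∀ f : Fin r → Finset ℕ, (∀ k, f k ∈ G) → t ≤ (⋂ k, (f k : Set ℕ)).ncard

/-- The shift `s_{i,j}` of a single set `A`, relative to the family `G`. -/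
def shiftSet (i j : ℕ) (G : Finset (Finset ℕ)) (A : Finset ℕ) : Finset ℕ :=
  if A ∩ {i, j} = {j} ∧ (A.erase j ∪ {i}) ∉ G then A.erase j ∪ {i} else A

/-- The shifting operation `σ_{i,j}` applied to a family. -/
def shift (i j : ℕ) (G : Finset (Finset ℕ)) : Finset (Finset ℕ) :=
  G.image (shiftSet i j G)

/-- `G` and `H` are isomorphic as families on ground set `[n]`:
`H` is the image of `G` under a permutation preserving `[n]`. -/
def Iso (n : ℕ) (G H : Finset (Finset ℕ)) : Prop :=
  ∃ τ : Equiv.Perm ℕ, (∀ x, x ∈ Finset.Icc 1 n ↔ τ x ∈ Finset.Icc 1 n) ∧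
    H = G.image (fun A => A.image τ)

/-- `G` is `(3,t)`-maximal on `[n]`. -/
def Max3 (n t : ℕ) (G : Finset (Finset ℕ)) : Prop :=
  (∀ A ∈ G, A ⊆ Finset.Icc 1 n) ∧ RWise 3 t G ∧
    ∀ F : Finset ℕ, F ⊆ Finset.Icc 1 n → F ∉ G → ¬ RWise 3 t (insert F G)

/-- `G` is shifted on `[n]`. -/
def Shifted (n : ℕ) (G : Finset (Finset ℕ)) : Prop :=
  ∀ i j : ℕ, 1 ≤ i → i < j → j ≤ n → shift i j G = G

/-- One shifting step. -/
def ShiftStep (n : ℕ) (G H : Finset (Finset ℕ)) : Prop :=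
  ∃ i j : ℕ, 1 ≤ i ∧ i ≤ n ∧ 1 ≤ j ∧ j ≤ n ∧ H = shift i j G

-- ===================== auxiliary development =====================

def Inter2 (t : ℕ) (G : Finset (Finset ℕ)) : Prop :=
  ∀ A ∈ G, ∀ B ∈ G, t ≤ (A ∩ B).card

lemma rwise_two (t : ℕ) (G : Finset (Finset ℕ)) (h : RWise 2 t G) : Inter2 t G := by
  intro A hA B hB
  have hmem : ∀ k : Fin 2, (if k = 0 then A else B) ∈ G := by
    intro k; fin_cases k <;> simp [hA, hB]
  have := h (fun k => if k = 0 then A else B) hmem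
  have hset : (⋂ k : Fin 2, (((if k = 0 then A else B) : Finset ℕ) : Set ℕ))
      = ((A ∩ B : Finset ℕ) : Set ℕ) := by
    ext x
    simp [Set.mem_iInter, Fin.forall_fin_two]
  rwa [hset, Set.ncard_coe_finset] at this

lemma inter_pair_eq {i j : ℕ} (hij : i ≠ j) (A : Finset ℕ) :
    A ∩ ({i, j} : Finset ℕ) = {j} ↔ j ∈ A ∧ i ∉ A := by
  constructor
  · intro h
    constructor
    · have : j ∈ A ∩ ({i, j} : Finset ℕ) := by rw [h]; simp
      exact (mem_inter.mp this).1
    · intro hi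
      have h2 : i ∈ A ∩ ({i, j} : Finset ℕ) := by simp [hi]
      rw [h] at h2
      simp at h2
      exact hij h2
  · rintro ⟨hj, hi⟩
    ext x
    simp only [mem_inter, mem_insert, mem_singleton]
    constructor
    · rintro ⟨hxA, hx | hx⟩
      · exact absurd (hx ▸ hxA) hi
      · exact hx
    · rintro rfl; exact ⟨hj, Or.inr rfl⟩

lemma shiftSet_moved {i j : ℕ} {G : Finset (Finset ℕ)} {A : Finset ℕ}
    (h : shiftSet i j G A ≠ A) :
    shiftSet i j G A = A.erase j ∪ {i} ∧ A ∩ {i, j} = {j} ∧ A.erase j ∪ {i} ∉ G := by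
  by_cases hc : A ∩ ({i, j} : Finset ℕ) = {j} ∧ (A.erase j ∪ {i}) ∉ G
  · exact ⟨by rw [shiftSet, if_pos hc], hc.1, hc.2⟩
  · exact absurd (by rw [shiftSet, if_neg hc]) h

lemma shiftSet_card {i j : ℕ} (hij : i ≠ j) (G : Finset (Finset ℕ)) (A : Finset ℕ) :
    (shiftSet i j G A).card = A.card := by
  by_cases h : shiftSet i j G A = A
  · rw [h]
  · obtain ⟨heq, hc, -⟩ := shiftSet_moved h
    obtain ⟨hj, hi⟩ := (inter_pair_eq hij A).mp hc
    have hierase : i ∉ A.erase j := fun hmem => hi (mem_of_mem_erase hmem)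
    have h1 : (A.erase j).card + 1 = A.card := Finset.card_erase_add_one hj
    rw [heq, union_comm, ← insert_eq, card_insert_of_notMem hierase, h1]

lemma shiftSet_injOn (i j : ℕ) (G : Finset (Finset ℕ)) :
    ∀ A ∈ G, ∀ B ∈ G, shiftSet i j G A = shiftSet i j G B → A = B := by
  intro A hA B hB h
  by_cases hA' : shiftSet i j G A = A <;> by_cases hB' : shiftSet i j G B = B
  · rw [hA', hB'] at h; exact h
  · obtain ⟨heqB, hcB, hnB⟩ := shiftSet_moved hB'
    rw [hA', heqB] at h
    exact absurd (h ▸ hA) hnB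
  · obtain ⟨heqA, hcA, hnA⟩ := shiftSet_moved hA'
    rw [hB', heqA] at h
    exact absurd (h ▸ hB) hnA
  · obtain ⟨heqA, hcA, hnA⟩ := shiftSet_moved hA'
    obtain ⟨heqB, hcB, hnB⟩ := shiftSet_moved hB'
    rw [heqA, heqB] at h
    have hij : i ≠ j := by
      rintro rfl
      have hjA : i ∈ A := by
        have hm : i ∈ A ∩ ({i, i} : Finset ℕ) := by rw [hcA]; simp
        exact (mem_inter.mp hm).1
      have heqAA : A.erase i ∪ {i} = A := by
        ext x
        simp only [mem_union, mem_erase, mem_singleton]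
        constructor
        · rintro (⟨-, hx⟩ | rfl)
          · exact hx
          · exact hjA
        · intro hx
          by_cases hxj : x = i
          · exact Or.inr hxj
          · exact Or.inl ⟨hxj, hx⟩
      exact hnA (by rw [heqAA]; exact hA)
    obtain ⟨hjA, hiA⟩ := (inter_pair_eq hij A).mp hcA
    obtain ⟨hjB, hiB⟩ := (inter_pair_eq hij B).mp hcB
    ext x
    have hx := Finset.ext_iff.mp h x
    simp only [mem_union, mem_erase, mem_singleton] at hx
    by_cases hxi : x = i
    · subst hxi; simp [hiA, hiB]
    · by_cases hxj : x = j
      · subst hxj; simp [hjA, hjB]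
      · constructor
        · intro hxA; rcases hx.mp (Or.inl ⟨hxj, hxA⟩) with ⟨-, hxB⟩ | h2
          · exact hxB
          · exact absurd h2 hxi
        · intro hxB; rcases hx.mpr (Or.inl ⟨hxj, hxB⟩) with ⟨-, hxA⟩ | h2
          · exact hxA
          · exact absurd h2 hxi

lemma mu_shift (p : ℝ) (n i j : ℕ) (hij : i ≠ j) (G : Finset (Finset ℕ)) :
    mu p n (shift i j G) = mu p n G := by
  unfold mu shift
  rw [Finset.sum_image (shiftSet_injOn i j G)]
  exact Finset.sum_congr rfl fun A _ => by rw [shiftSet_card hij]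

lemma shift_subset_Icc {n i j : ℕ} (hi1 : 1 ≤ i) (hin : i ≤ n) {G : Finset (Finset ℕ)}
    (hG : ∀ A ∈ G, A ⊆ Icc 1 n) : ∀ A ∈ shift i j G, A ⊆ Icc 1 n := by
  intro X hX
  obtain ⟨A, hA, rfl⟩ := mem_image.mp hX
  by_cases h : shiftSet i j G A = A
  · rw [h]; exact hG A hA
  · obtain ⟨heq, -, -⟩ := shiftSet_moved h
    rw [heq]
    intro x hx
    rcases mem_union.mp hx with hx | hx
    · exact hG A hA (mem_of_mem_erase hx)
    · rw [mem_singleton.mp hx]; exact mem_Icc.mpr ⟨hi1, hin⟩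

lemma shifted_mem {n : ℕ} {G : Finset (Finset ℕ)} (hsh : Shifted n G) {i j : ℕ}
    (h1 : 1 ≤ i) (hij : i < j) (hjn : j ≤ n) {B : Finset ℕ} (hB : B ∈ G)
    (hjB : j ∈ B) (hiB : i ∉ B) : B.erase j ∪ {i} ∈ G := by
  by_contra hne
  have hcond : B ∩ ({i, j} : Finset ℕ) = {j} := (inter_pair_eq hij.ne B).mpr ⟨hjB, hiB⟩
  have heq : shiftSet i j G B = B.erase j ∪ {i} := by rw [shiftSet, if_pos ⟨hcond, hne⟩]
  have hmem : B.erase j ∪ {i} ∈ shift i j G := heq ▸ mem_image_of_mem _ hB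
  rw [hsh i j h1 hij hjn] at hmem
  exact hne hmem

lemma shift_inter_mixed {t i j : ℕ} (hij : i < j) {G : Finset (Finset ℕ)} (hG : Inter2 t G)
    {A B : Finset ℕ} (hA : A ∈ G) (hB : B ∈ G)
    (hjA : j ∈ A) (hiA : i ∉ A) (hBfix : shiftSet i j G B = B) :
    t ≤ ((A.erase j ∪ {i}) ∩ B).card := by
  by_cases hjB : j ∈ B
  · by_cases hiB : i ∈ B
    · -- intersection = insert i ((A ∩ B).erase j)
      have hident : (A.erase j ∪ {i}) ∩ B = insert i ((A ∩ B).erase j) := by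
        ext x
        simp only [mem_inter, mem_union, mem_erase, mem_singleton, mem_insert]
        constructor
        · rintro ⟨⟨hxj, hxA⟩ | rfl, hxB⟩
          · exact Or.inr ⟨hxj, hxA, hxB⟩
          · exact Or.inl rfl
        · rintro (rfl | ⟨hxj, hxA, hxB⟩)
          · exact ⟨Or.inr rfl, hiB⟩
          · exact ⟨Or.inl ⟨hxj, hxA⟩, hxB⟩
      rw [hident, card_insert_of_notMem (fun hm => hiA (mem_inter.mp (mem_of_mem_erase hm)).1)]
      have h1 : ((A ∩ B).erase j).card + 1 = (A ∩ B).card :=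
        Finset.card_erase_add_one (mem_inter.mpr ⟨hjA, hjB⟩)
      have := hG A hA B hB
      omega
    · -- i ∉ B, j ∈ B : B could have been shifted, so B.erase j ∪ {i} ∈ G
      have hcond : B ∩ ({i, j} : Finset ℕ) = {j} := (inter_pair_eq hij.ne B).mpr ⟨hjB, hiB⟩
      have hBG : B.erase j ∪ {i} ∈ G := by
        by_contra hn
        have : shiftSet i j G B = B.erase j ∪ {i} := by rw [shiftSet, if_pos ⟨hcond, hn⟩]
        rw [hBfix] at this
        have : i ∈ B := by rw [this]; simp
        exact hiB this
      have hAB' := hG A hA _ hBG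
      have hident1 : A ∩ (B.erase j ∪ {i}) = (A ∩ B).erase j := by
        ext x
        simp only [mem_inter, mem_union, mem_erase, mem_singleton]
        constructor
        · rintro ⟨hxA, ⟨hxj, hxB⟩ | rfl⟩
          · exact ⟨hxj, hxA, hxB⟩
          · exact absurd hxA hiA
        · rintro ⟨hxj, hxA, hxB⟩; exact ⟨hxA, Or.inl ⟨hxj, hxB⟩⟩
      have hident2 : (A.erase j ∪ {i}) ∩ B = (A ∩ B).erase j := by
        ext x
        simp only [mem_inter, mem_union, mem_erase, mem_singleton]
        constructor
        · rintro ⟨⟨hxj, hxA⟩ | rfl, hxB⟩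
          · exact ⟨hxj, hxA, hxB⟩
          · exact absurd hxB hiB
        · rintro ⟨hxj, hxA, hxB⟩; exact ⟨Or.inl ⟨hxj, hxA⟩, hxB⟩
      rw [hident2, ← hident1]
      exact hAB'
  · -- j ∉ B : A ∩ B ⊆ result
    have hsub : A ∩ B ⊆ (A.erase j ∪ {i}) ∩ B := by
      intro x hx
      obtain ⟨hxA, hxB⟩ := mem_inter.mp hx
      have hxj : x ≠ j := fun h => hjB (h ▸ hxB)
      exact mem_inter.mpr ⟨mem_union_left _ (mem_erase.mpr ⟨hxj, hxA⟩), hxB⟩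
    exact le_trans (hG A hA B hB) (card_le_card hsub)

lemma shift_inter {t i j : ℕ} (hij : i < j) {G : Finset (Finset ℕ)} (hG : Inter2 t G) :
    Inter2 t (shift i j G) := by
  intro X hX Y hY
  obtain ⟨A, hA, rfl⟩ := mem_image.mp hX
  obtain ⟨B, hB, rfl⟩ := mem_image.mp hY
  by_cases hA' : shiftSet i j G A = A <;> by_cases hB' : shiftSet i j G B = B
  · rw [hA', hB']; exact hG A hA B hB
  · obtain ⟨heqB, hcB, -⟩ := shiftSet_moved hB'
    obtain ⟨hjB, hiB⟩ := (inter_pair_eq hij.ne B).mp hcB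
    rw [hA', heqB, inter_comm]
    exact shift_inter_mixed hij hG hB hA hjB hiB hA'
  · obtain ⟨heqA, hcA, -⟩ := shiftSet_moved hA'
    obtain ⟨hjA, hiA⟩ := (inter_pair_eq hij.ne A).mp hcA
    rw [hB', heqA]
    exact shift_inter_mixed hij hG hA hB hjA hiA hB'
  · obtain ⟨heqA, hcA, -⟩ := shiftSet_moved hA'
    obtain ⟨heqB, hcB, -⟩ := shiftSet_moved hB'
    obtain ⟨hjA, hiA⟩ := (inter_pair_eq hij.ne A).mp hcA
    obtain ⟨hjB, hiB⟩ := (inter_pair_eq hij.ne B).mp hcB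
    rw [heqA, heqB]
    have hident : (A.erase j ∪ {i}) ∩ (B.erase j ∪ {i}) = insert i ((A ∩ B).erase j) := by
      ext x
      simp only [mem_inter, mem_union, mem_erase, mem_singleton, mem_insert]
      constructor
      · rintro ⟨⟨hxj, hxA⟩ | rfl, ⟨-, hxB⟩ | hxi⟩
        · exact Or.inr ⟨hxj, hxA, hxB⟩
        · exact Or.inl hxi
        · exact Or.inl rfl
        · exact Or.inl rfl
      · rintro (rfl | ⟨hxj, hxA, hxB⟩)
        · exact ⟨Or.inr rfl, Or.inr rfl⟩
        · exact ⟨Or.inl ⟨hxj, hxA⟩, Or.inl ⟨hxj, hxB⟩⟩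
    rw [hident, card_insert_of_notMem (fun hm => hiA (mem_inter.mp (mem_of_mem_erase hm)).1)]
    have h1 : ((A ∩ B).erase j).card + 1 = (A ∩ B).card :=
      Finset.card_erase_add_one (mem_inter.mpr ⟨hjA, hjB⟩)
    have := hG A hA B hB
    omega

-- ===================== termination of shifting =====================

def wtF (G : Finset (Finset ℕ)) : ℕ := ∑ A ∈ G, ∑ x ∈ A, x

lemma shiftSet_sum_le {i j : ℕ} (hij : i < j) (G : Finset (Finset ℕ)) {A : Finset ℕ} :
    ∑ x ∈ shiftSet i j G A, x ≤ ∑ x ∈ A, x := by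
  by_cases h : shiftSet i j G A = A
  · rw [h]
  · obtain ⟨heq, hc, -⟩ := shiftSet_moved h
    obtain ⟨hjA, hiA⟩ := (inter_pair_eq hij.ne A).mp hc
    have hierase : i ∉ A.erase j := fun hm => hiA (mem_of_mem_erase hm)
    have h1 : ∑ x ∈ A.erase j, x + j = ∑ x ∈ A, x := Finset.sum_erase_add A _ hjA
    rw [heq, union_comm, ← insert_eq, Finset.sum_insert hierase]
    omega

lemma shiftSet_sum_lt {i j : ℕ} (hij : i < j) (G : Finset (Finset ℕ)) {A : Finset ℕ}
    (h : shiftSet i j G A ≠ A) :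
    ∑ x ∈ shiftSet i j G A, x < ∑ x ∈ A, x := by
  obtain ⟨heq, hc, -⟩ := shiftSet_moved h
  obtain ⟨hjA, hiA⟩ := (inter_pair_eq hij.ne A).mp hc
  have hierase : i ∉ A.erase j := fun hm => hiA (mem_of_mem_erase hm)
  have h1 : ∑ x ∈ A.erase j, x + j = ∑ x ∈ A, x := Finset.sum_erase_add A _ hjA
  rw [heq, union_comm, ← insert_eq, Finset.sum_insert hierase]
  omega

lemma wtF_shift_lt {i j : ℕ} (hij : i < j) {G : Finset (Finset ℕ)}
    (hne : shift i j G ≠ G) : wtF (shift i j G) < wtF G := by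
  unfold wtF shift
  rw [Finset.sum_image (shiftSet_injOn i j G)]
  have hex : ∃ A ∈ G, shiftSet i j G A ≠ A := by
    by_contra hall
    push_neg at hall
    apply hne
    unfold shift
    rw [Finset.image_congr (g := id) (fun A hA => hall A hA), Finset.image_id]
  obtain ⟨A₀, hA₀, hA₀ne⟩ := hex
  exact Finset.sum_lt_sum (fun A _ => shiftSet_sum_le hij G)
    ⟨A₀, hA₀, shiftSet_sum_lt hij G hA₀ne⟩

lemma exists_shifted (n t : ℕ) (p : ℝ) :
    ∀ N (G : Finset (Finset ℕ)), wtF G < N → (∀ A ∈ G, A ⊆ Icc 1 n) → Inter2 t G →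
    ∃ H, (∀ A ∈ H, A ⊆ Icc 1 n) ∧ Inter2 t H ∧ Shifted n H ∧ mu p n H = mu p n G := by
  intro N
  induction N with
  | zero => intro G h _ _; exact absurd h (Nat.not_lt_zero _)
  | succ N ih =>
    intro G hN hsub hint
    by_cases hsh : Shifted n G
    · exact ⟨G, hsub, hint, hsh, rfl⟩
    · unfold Shifted at hsh
      push_neg at hsh
      obtain ⟨i, j, h1, hij, hjn, hne⟩ := hsh
      have hlt := wtF_shift_lt hij hne
      obtain ⟨H, a, b, c, d⟩ := ih (shift i j G) (by omega)
        (shift_subset_Icc h1 (le_trans (le_of_lt hij) hjn) hsub) (shift_inter hij hint)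
      exact ⟨H, a, b, c, by rw [d, mu_shift p n i j hij.ne]⟩

-- ===================== walk lemma =====================

lemma min_step {A : Finset ℕ} (hA1 : ∀ x ∈ A, 1 ≤ x) {v : ℕ}
    (hne : (A \ Icc 1 v).Nonempty) :
    ∃ j ∈ A, v < j ∧ A ∩ Icc 1 j = insert j (A ∩ Icc 1 v) ∧ (∀ x ∈ A, v < x → j ≤ x) := by
  set j := (A \ Icc 1 v).min' hne with hjdef
  have hsd : ∀ x : ℕ, x ∈ A \ Icc 1 v ↔ x ∈ A ∧ v < x := by
    intro x
    simp only [mem_sdiff, mem_Icc, not_and, not_le]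
    constructor
    · rintro ⟨hx, h2⟩; exact ⟨hx, h2 (hA1 x hx)⟩
    · rintro ⟨hx, h2⟩; exact ⟨hx, fun _ => h2⟩
  have hjmem := (hsd j).mp (Finset.min'_mem _ hne)
  have hmin : ∀ x ∈ A, v < x → j ≤ x := fun x hx hvx =>
    Finset.min'_le _ x ((hsd x).mpr ⟨hx, hvx⟩)
  refine ⟨j, hjmem.1, hjmem.2, ?_, hmin⟩
  ext x
  simp only [mem_inter, mem_Icc, mem_insert]
  constructor
  · rintro ⟨hx, h1, h2⟩
    by_cases hxv : x ≤ v
    · exact Or.inr ⟨hx, h1, hxv⟩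
    · exact Or.inl (le_antisymm h2 (hmin x hx (by omega)))
  · rintro (rfl | ⟨hx, h1, h2⟩)
    · exact ⟨hjmem.1, hA1 _ hjmem.1, le_refl _⟩
    · exact ⟨hx, h1, by omega⟩

lemma exists_threshold {n : ℕ} {A : Finset ℕ} (hA : A ⊆ Icc 1 n) :
    ∀ k, k ≤ A.card → ∃ v, (A ∩ Icc 1 v).card = k := by
  intro k
  induction k with
  | zero =>
    intro _
    refine ⟨0, ?_⟩
    rw [Finset.Icc_eq_empty (by omega), Finset.inter_empty, Finset.card_empty]
  | succ k ih =>
    intro hk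
    obtain ⟨v, hv⟩ := ih (by omega)
    have hne : (A \ Icc 1 v).Nonempty := by
      rw [Finset.sdiff_nonempty]
      intro hsub'
      have h2 : A ∩ Icc 1 v = A := inter_eq_left.mpr hsub'
      rw [h2] at hv
      omega
    obtain ⟨j, hjA, hvj, hid, -⟩ :=
      min_step (fun x hx => (mem_Icc.mp (hA hx)).1) hne
    refine ⟨j, ?_⟩
    rw [hid, card_insert_of_notMem (by
      simp only [mem_inter, mem_Icc, not_and, not_le]
      intro _ _
      omega)]
    omega

lemma walk_lemma {n u : ℕ} {G : Finset (Finset ℕ)} (hsub : ∀ A ∈ G, A ⊆ Icc 1 n)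
    (hint : Inter2 (u + 1) G) (hsh : Shifted n G) {A : Finset ℕ} (hA : A ∈ G) :
    ∃ m, m ≤ n ∧ m + (u + 1) ≤ 2 * (A ∩ Icc 1 m).card := by
  by_contra hbad
  push_neg at hbad
  have hAcard : u + 1 ≤ A.card := by
    have h := hint A hA A hA
    rwa [inter_self] at h
  obtain ⟨v₀, hv₀⟩ := exists_threshold (hsub A hA) u (by omega)
  suffices hdriver : ∀ k v, (A \ Icc 1 v).card = k →
      (∃ C ∈ G, (∀ x, v < x → (x ∈ C ↔ x ∈ A)) ∧
        (C ∩ Icc 1 v).card ≤ (A ∩ Icc 1 v).card ∧ ((A ∩ C) ∩ Icc 1 v).card = u) →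
      False by
    exact hdriver _ v₀ rfl ⟨A, hA, fun x _ => Iff.rfl, le_refl _, by rw [inter_self]; exact hv₀⟩
  intro k
  induction k with
  | zero =>
    rintro v h0 ⟨C, hC, hagree, hle, hcap⟩
    have hsubv : A ⊆ Icc 1 v := by
      rw [← Finset.sdiff_eq_empty_iff_subset]
      exact Finset.card_eq_zero.mp h0
    have hACv : (A ∩ C) ∩ Icc 1 v = A ∩ C :=
      inter_eq_left.mpr (le_trans (inter_subset_left) hsubv)
    have h2 := hint A hA C hC
    rw [hACv] at hcap
    omega
  | succ k ih =>
    rintro v hk ⟨C, hC, hagree, hle, hcap⟩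
    have hne : (A \ Icc 1 v).Nonempty := Finset.card_pos.mp (by omega)
    obtain ⟨j, hjA, hvj, hid, hmin⟩ := min_step (fun x hx => (mem_Icc.mp (hsub A hA hx)).1) hne
    have hj1n := mem_Icc.mp (hsub A hA hjA)
    have hbj := hbad j hj1n.2
    have hjnotin : j ∉ A ∩ Icc 1 v := by
      simp only [mem_inter, mem_Icc, not_and, not_le]
      intro _ _; omega
    have hcardAj : (A ∩ Icc 1 j).card = (A ∩ Icc 1 v).card + 1 := by
      rw [hid, card_insert_of_notMem hjnotin]
    -- the candidate set for b
    have hDid : (A ∪ C) ∩ Icc 1 (j - 1) = (A ∪ C) ∩ Icc 1 v := by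
      ext x
      simp only [mem_inter, mem_union, mem_Icc]
      constructor
      · rintro ⟨hx, h1, h2⟩
        refine ⟨hx, h1, ?_⟩
        by_contra hxv
        push_neg at hxv
        have hxA : x ∈ A := by
          rcases hx with hx | hx
          · exact hx
          · exact (hagree x hxv).mp hx
        have := hmin x hxA hxv
        omega
      · rintro ⟨hx, h1, h2⟩
        exact ⟨hx, h1, by omega⟩
    have hdistrib : (A ∪ C) ∩ Icc 1 v = (A ∩ Icc 1 v) ∪ (C ∩ Icc 1 v) :=
      Finset.union_inter_distrib_right A C _
    have hinter : (A ∩ Icc 1 v) ∩ (C ∩ Icc 1 v) = (A ∩ C) ∩ Icc 1 v := by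
      ext x
      simp only [mem_inter, mem_Icc]
      tauto
    have hcards := Finset.card_union_add_card_inter (A ∩ Icc 1 v) (C ∩ Icc 1 v)
    rw [hinter, hcap] at hcards
    -- now count free spots in Icc 1 (j-1)
    have hIccCard : (Icc 1 (j - 1)).card = j - 1 := by
      rw [Nat.card_Icc]; omega
    have hsplit : ((Icc 1 (j-1)) \ ((A ∪ C) ∩ Icc 1 (j-1))).card
        = (Icc 1 (j-1)).card - ((A ∪ C) ∩ Icc 1 (j-1)).card :=
      Finset.card_sdiff_of_subset (inter_subset_right)
    have hsd2 : (Icc 1 (j-1)) \ ((A ∪ C) ∩ Icc 1 (j-1)) = (Icc 1 (j-1)) \ (A ∪ C) := by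
      ext x
      simp only [mem_sdiff, mem_inter]
      tauto
    rw [hsd2] at hsplit
    have hcarddistrib : ((A ∪ C) ∩ Icc 1 v).card = ((A ∩ Icc 1 v) ∪ (C ∩ Icc 1 v)).card := by
      rw [hdistrib]
    have hfree : ((Icc 1 (j-1)) \ (A ∪ C)).Nonempty := by
      apply Finset.card_pos.mp
      rw [hsplit, hDid, hIccCard]
      omega
    obtain ⟨b, hb⟩ := hfree
    rw [mem_sdiff, mem_Icc, mem_union] at hb
    obtain ⟨⟨hb1, hb2⟩, hbAC⟩ := hb
    have hbA : b ∉ A := fun h => hbAC (Or.inl h)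
    have hbC : b ∉ C := fun h => hbAC (Or.inr h)
    have hbj : b < j := by omega
    have hjC : j ∈ C := (hagree j hvj).mpr hjA
    have hC'G : C.erase j ∪ {b} ∈ G := shifted_mem hsh hb1 hbj hj1n.2 hC hjC hbC
    set C' := C.erase j ∪ {b} with hC'def
    -- verify the new invariant at threshold j
    have hmemC' : ∀ x : ℕ, x ∈ C' ↔ ((x ∈ C ∧ x ≠ j) ∨ x = b) := by
      intro x
      simp only [hC'def, mem_union, mem_erase, mem_singleton]
      tauto
    have hagree' : ∀ x, j < x → (x ∈ C' ↔ x ∈ A) := by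
      intro x hx
      rw [hmemC']
      constructor
      · rintro (⟨hxC, -⟩ | rfl)
        · exact (hagree x (by omega)).mp hxC
        · omega
      · intro hxA
        exact Or.inl ⟨(hagree x (by omega)).mpr hxA, by omega⟩
    have hC'j : C' ∩ Icc 1 j = insert b (C ∩ Icc 1 v) := by
      ext x
      rw [mem_inter, hmemC']
      simp only [mem_Icc, mem_insert, mem_inter]
      constructor
      · rintro ⟨⟨hxC, hxj⟩ | rfl, h1, h2⟩
        · refine Or.inr ⟨hxC, h1, ?_⟩
          by_contra hxv
          push_neg at hxv
          have hxA : x ∈ A := (hagree x hxv).mp hxC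
          have := hmin x hxA hxv
          omega
        · exact Or.inl rfl
      · rintro (rfl | ⟨hxC, h1, h2⟩)
        · exact ⟨Or.inr rfl, hb1, by omega⟩
        · exact ⟨Or.inl ⟨hxC, by omega⟩, h1, by omega⟩
    have hbnotCv : b ∉ C ∩ Icc 1 v := fun h => hbC (mem_inter.mp h).1
    have hle' : (C' ∩ Icc 1 j).card ≤ (A ∩ Icc 1 j).card := by
      rw [hC'j, card_insert_of_notMem hbnotCv, hcardAj]
      omega
    have hcap' : ((A ∩ C') ∩ Icc 1 j) = (A ∩ C) ∩ Icc 1 v := by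
      ext x
      rw [mem_inter, mem_inter, hmemC']
      simp only [mem_Icc, mem_inter]
      constructor
      · rintro ⟨⟨hxA, ⟨hxC, hxj⟩ | rfl⟩, h1, h2⟩
        · refine ⟨⟨hxA, hxC⟩, h1, ?_⟩
          by_contra hxv
          push_neg at hxv
          have := hmin x hxA hxv
          omega
        · exact absurd hxA hbA
      · rintro ⟨⟨hxA, hxC⟩, h1, h2⟩
        exact ⟨⟨hxA, Or.inl ⟨hxC, by omega⟩⟩, h1, by omega⟩
    have hkj : (A \ Icc 1 j).card = k := by
      have hsdid : A \ Icc 1 j = (A \ Icc 1 v).erase j := by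
        ext x
        simp only [mem_sdiff, mem_erase, mem_Icc]
        constructor
        · rintro ⟨hx, h2⟩
          have hx1 : 1 ≤ x := (mem_Icc.mp (hsub A hA hx)).1
          push_neg at h2
          have hxj : j < x := h2 hx1
          exact ⟨by omega, hx, by omega⟩
        · rintro ⟨hxj, hx, h2⟩
          have hx1 : 1 ≤ x := (mem_Icc.mp (hsub A hA hx)).1
          push_neg at h2
          have hvx : v < x := h2 hx1
          have := hmin x hx hvx
          refine ⟨hx, ?_⟩
          rw [not_and, not_le]
          intro _
          omega
      have hjin : j ∈ A \ Icc 1 v := by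
        rw [mem_sdiff]
        exact ⟨hjA, by simp only [mem_Icc, not_and, not_le]; intro _; omega⟩
      rw [hsdid, Finset.card_erase_of_mem hjin, hk]
      omega
    exact ih j hkj ⟨C', hC'G, hagree', hle', by rw [hcap']; exact hcap⟩

-- ===================== the hitting-probability bound =====================

def hitCond (a b t : ℕ) (A : Finset ℕ) : Prop :=
  ∃ m ∈ Finset.range (b + 1), m + t ≤ 2 * (A ∩ Icc (a + 1) (a + m)).card

instance hitCond.decPred (a b t : ℕ) : DecidablePred (hitCond a b t) := fun A => by
  unfold hitCond; infer_instance

noncomputable def hitS (p : ℝ) (a b t : ℕ) : ℝ :=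
  ∑ A ∈ (Icc (a + 1) (a + b)).powerset.filter (hitCond a b t),
    p ^ A.card * (1 - p) ^ (b - A.card)

lemma icc_insert (a b : ℕ) :
    Icc (a + 1) (a + (b + 1)) = insert (a + 1) (Icc (a + 1 + 1) (a + 1 + b)) := by
  ext x
  simp only [mem_Icc, mem_insert]
  omega

lemma icc_notmem (a b : ℕ) : a + 1 ∉ Icc (a + 1 + 1) (a + 1 + b) := by
  simp only [mem_Icc]
  omega

lemma total_one (p : ℝ) :
    ∀ b a, ∑ A ∈ (Icc (a + 1) (a + b)).powerset,
      p ^ A.card * (1 - p) ^ (b - A.card) = 1 := by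
  intro b
  induction b with
  | zero =>
    intro a
    rw [show a + 0 = a from rfl, Finset.Icc_eq_empty (by omega), Finset.powerset_empty,
      Finset.sum_singleton]
    simp
  | succ b ih =>
    intro a
    rw [icc_insert a b, Finset.sum_powerset_insert (icc_notmem a b)]
    have hcard : ∀ A ∈ (Icc (a + 1 + 1) (a + 1 + b)).powerset, A.card ≤ b := by
      intro A hA
      have h1 := card_le_card (mem_powerset.mp hA)
      rwa [Nat.card_Icc, show a + 1 + b + 1 - (a + 1 + 1) = b by omega] at h1
    have hnotm : ∀ A ∈ (Icc (a + 1 + 1) (a + 1 + b)).powerset, a + 1 ∉ A := by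
      intro A hA hm
      exact icc_notmem a b (mem_powerset.mp hA hm)
    have e1 : ∑ A ∈ (Icc (a + 1 + 1) (a + 1 + b)).powerset,
        p ^ A.card * (1 - p) ^ (b + 1 - A.card)
        = (1 - p) * ∑ A ∈ (Icc (a + 1 + 1) (a + 1 + b)).powerset,
            p ^ A.card * (1 - p) ^ (b - A.card) := by
      rw [Finset.mul_sum]
      apply Finset.sum_congr rfl
      intro A hA
      rw [show b + 1 - A.card = (b - A.card) + 1 by have := hcard A hA; omega, pow_succ]
      ring
    have e2 : ∑ A ∈ (Icc (a + 1 + 1) (a + 1 + b)).powerset,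
        p ^ (insert (a + 1) A).card * (1 - p) ^ (b + 1 - (insert (a + 1) A).card)
        = p * ∑ A ∈ (Icc (a + 1 + 1) (a + 1 + b)).powerset,
            p ^ A.card * (1 - p) ^ (b - A.card) := by
      rw [Finset.mul_sum]
      apply Finset.sum_congr rfl
      intro A hA
      rw [card_insert_of_notMem (hnotm A hA),
        show b + 1 - (A.card + 1) = b - A.card by omega, pow_succ]
      ring
    rw [e1, e2, ih (a + 1)]
    ring

lemma cond_shift_out {a b u : ℕ} {A : Finset ℕ} (hA : A ⊆ Icc (a + 1 + 1) (a + 1 + b))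
    (h : hitCond a (b + 1) (u + 1) A) : hitCond (a + 1) b (u + 2) A := by
  obtain ⟨m, hm, hcard⟩ := h
  rw [mem_range] at hm
  match m with
  | 0 =>
    rw [show a + 0 = a from rfl, Finset.Icc_eq_empty (by omega), Finset.inter_empty,
      Finset.card_empty] at hcard
    omega
  | m + 1 =>
    refine ⟨m, mem_range.mpr (by omega), ?_⟩
    have hid : A ∩ Icc (a + 1) (a + (m + 1)) = A ∩ Icc (a + 1 + 1) (a + 1 + m) := by
      ext x
      simp only [mem_inter, mem_Icc]
      constructor
      · rintro ⟨hx, h1, h2⟩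
        exact ⟨hx, by have := mem_Icc.mp (hA hx); omega, by omega⟩
      · rintro ⟨hx, h1, h2⟩
        exact ⟨hx, by omega, by omega⟩
    rw [hid] at hcard
    omega

lemma cond_shift_in {a b u : ℕ} {A : Finset ℕ} (hA : A ⊆ Icc (a + 1 + 1) (a + 1 + b))
    (h : hitCond a (b + 1) (u + 1) (insert (a + 1) A)) : hitCond (a + 1) b u A := by
  obtain ⟨m, hm, hcard⟩ := h
  rw [mem_range] at hm
  have hxA : a + 1 ∉ A := fun hx => by have := mem_Icc.mp (hA hx); omega
  match m with
  | 0 =>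
    rw [show a + 0 = a from rfl, Finset.Icc_eq_empty (by omega), Finset.inter_empty,
      Finset.card_empty] at hcard
    omega
  | m + 1 =>
    have hid : insert (a + 1) A ∩ Icc (a + 1) (a + (m + 1))
        = insert (a + 1) (A ∩ Icc (a + 1 + 1) (a + 1 + m)) := by
      ext x
      simp only [mem_inter, mem_insert, mem_Icc]
      constructor
      · rintro ⟨rfl | hx, h1, h2⟩
        · exact Or.inl rfl
        · exact Or.inr ⟨hx, by have := mem_Icc.mp (hA hx); omega, by omega⟩
      · rintro (rfl | ⟨hx, h1, h2⟩)
        · exact ⟨Or.inl rfl, by omega, by omega⟩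
        · exact ⟨Or.inr hx, by omega, by omega⟩
    have hnm : a + 1 ∉ A ∩ Icc (a + 1 + 1) (a + 1 + m) := fun hmem => hxA (mem_inter.mp hmem).1
    rw [hid, card_insert_of_notMem hnm] at hcard
    exact ⟨m, mem_range.mpr (by omega), by omega⟩

lemma hitS_step (p : ℝ) (hp : 0 < p) (hp1 : p < 1) (a b u : ℕ) :
    hitS p a (b + 1) (u + 1) ≤ (1 - p) * hitS p (a + 1) b (u + 2) + p * hitS p (a + 1) b u := by
  have hq : (0:ℝ) < 1 - p := by linarith
  unfold hitS
  rw [Finset.sum_filter, Finset.sum_filter, Finset.sum_filter,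
    icc_insert a b, Finset.sum_powerset_insert (icc_notmem a b), Finset.mul_sum, Finset.mul_sum]
  apply add_le_add
  · apply Finset.sum_le_sum
    intro A hA
    have hsubA := mem_powerset.mp hA
    have hcardA : A.card ≤ b := by
      have h1 := card_le_card hsubA
      rwa [Nat.card_Icc, show a + 1 + b + 1 - (a + 1 + 1) = b by omega] at h1
    by_cases hc : hitCond a (b + 1) (u + 1) A
    · rw [if_pos hc, if_pos (cond_shift_out hsubA hc)]
      rw [show b + 1 - A.card = (b - A.card) + 1 by omega, pow_succ]
      apply le_of_eq
      ring
    · rw [if_neg hc]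
      by_cases hc2 : hitCond (a + 1) b (u + 2) A
      · rw [if_pos hc2]; positivity
      · rw [if_neg hc2]; simp
  · apply Finset.sum_le_sum
    intro A hA
    have hsubA := mem_powerset.mp hA
    have hcardA : A.card ≤ b := by
      have h1 := card_le_card hsubA
      rwa [Nat.card_Icc, show a + 1 + b + 1 - (a + 1 + 1) = b by omega] at h1
    have hxA : a + 1 ∉ A := fun hx => icc_notmem a b (hsubA hx)
    by_cases hc : hitCond a (b + 1) (u + 1) (insert (a + 1) A)
    · rw [if_pos hc, if_pos (cond_shift_in hsubA hc), card_insert_of_notMem hxA,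
        show b + 1 - (A.card + 1) = b - A.card by omega, pow_succ]
      apply le_of_eq
      ring
    · rw [if_neg hc]
      by_cases hc2 : hitCond (a + 1) b u A
      · rw [if_pos hc2]; positivity
      · rw [if_neg hc2]; simp

lemma hit_le (p : ℝ) (hp : 0 < p) (hp1 : p < 1) :
    ∀ b a t, hitS p a b t ≤ (p / (1 - p)) ^ t := by
  have hq : (0:ℝ) < 1 - p := by linarith
  have hr0 : (0:ℝ) ≤ p / (1 - p) := by positivity
  intro b
  induction b with
  | zero =>
    intro a t
    unfold hitS
    rw [show a + 0 = a from rfl, Finset.Icc_eq_empty (by omega), Finset.powerset_empty]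
    match t with
    | 0 =>
      rw [Finset.filter_singleton, if_pos ⟨0, by simp, by simp⟩, Finset.sum_singleton]
      simp
    | t + 1 =>
      rw [Finset.filter_singleton, if_neg (by
        rintro ⟨m, hm, hcard⟩
        rw [mem_range] at hm
        interval_cases m
        simp at hcard)]
      rw [Finset.sum_empty]
      positivity
  | succ b ih =>
    intro a t
    match t with
    | 0 =>
      have h1 : hitS p a (b + 1) 0
          ≤ ∑ A ∈ (Icc (a + 1) (a + (b + 1))).powerset,
              p ^ A.card * (1 - p) ^ (b + 1 - A.card) := by
        unfold hitS
        apply Finset.sum_le_sum_of_subset_of_nonneg (Finset.filter_subset _ _)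
        intro A _ _
        positivity
      rw [total_one p (b + 1) a] at h1
      simpa using h1
    | u + 1 =>
      have hrec := hitS_step p hp hp1 a b u
      have h2 := ih (a + 1) (u + 2)
      have h3 := ih (a + 1) u
      have halg : (1 - p) * (p / (1 - p)) ^ (u + 2) + p * (p / (1 - p)) ^ u
          = (p / (1 - p)) ^ (u + 1) := by
        have h : (1 - p) * (p / (1 - p)) = p := by rw [mul_comm]; exact div_mul_cancel₀ p hq.ne'
        linear_combination (p / (1 - p)) ^ u * (p / (1 - p) - 1) * h
      calc hitS p a (b + 1) (u + 1)
          ≤ (1 - p) * hitS p (a + 1) b (u + 2) + p * hitS p (a + 1) b u := hrec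
        _ ≤ (1 - p) * (p / (1 - p)) ^ (u + 2) + p * (p / (1 - p)) ^ u := by
            apply add_le_add
            · exact mul_le_mul_of_nonneg_left h2 (le_of_lt hq)
            · exact mul_le_mul_of_nonneg_left h3 (le_of_lt hp)
        _ = (p / (1 - p)) ^ (u + 1) := halg

-- ===================== main theorem =====================

theorem stmt_11 (n t : ℕ) (G : Finset (Finset ℕ)) (hG : ∀ A ∈ G, A ⊆ Finset.Icc 1 n)
    (hint : RWise 2 t G) (p : ℝ) (hp : 0 < p) (hp2 : p ≤ 1 / 2) :
    mu p n G ≤ (p / (1 - p)) ^ t := by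
  have hp1 : p < 1 := by linarith
  have hpair : Inter2 t G := rwise_two t G hint
  obtain ⟨H, hHsub, hHint, hHsh, hHmu⟩ :=
    exists_shifted n t p (wtF G + 1) G (by omega) hG hpair
  have hsubHit : H ⊆ (Icc (0 + 1) (0 + n)).powerset.filter (hitCond 0 n t) := by
    intro A hA
    rw [mem_filter, mem_powerset]
    constructor
    · rw [zero_add, zero_add]
      exact hHsub A hA
    · match t with
      | 0 =>
        exact ⟨0, mem_range.mpr (by omega), by omega⟩
      | u + 1 =>
        obtain ⟨m, hmn, hcard⟩ := walk_lemma hHsub hHint hHsh hA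
        refine ⟨m, mem_range.mpr (by omega), ?_⟩
        rw [zero_add, zero_add]
        exact hcard
  have hmuH : mu p n H ≤ hitS p 0 n t := by
    unfold mu hitS
    apply Finset.sum_le_sum_of_subset_of_nonneg hsubHit
    intro A _ _
    have : (0:ℝ) < 1 - p := by linarith
    positivity
  rw [← hHmu]
  exact le_trans hmuH (hit_le p hp hp1 n 0 t)
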